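/- Let P : ℝⁿ → ℝᵐ be differentiable on the closed ball B = {x : ‖x − x⁰‖ ≤ ρ} with derivative L-Lipschitz on B in the operator norm (‖P'(x) − P'(x')‖ ≤ L‖x − x'‖ for x, x' ∈ B), and suppose there is μ > 0 with ‖P'(x)ᵀh‖ ≥ μ‖h‖ for all x ∈ B and all h ∈ ℝᵐ. Set c = ∑_{ℓ ≥ 0} (1/2)^{2^ℓ}, and assume either (i) Lρ/(2μ) ≤ c and ‖P(x⁰)‖ ≤ (2μ²/L)·(Lρ)/(Lρ + 2μ), or (ii) Lρ/(2μ) > c and ‖P(x⁰)‖ ≤ (μ²/L)·(1 + (1/2)·⌊Lρ/μ − 2c⌋). Let the sequences (x^k), (z^k) satisfy for every k: x^k ∈ B, P'(x^k) z^k = P(x^k), ‖z^k‖ ≤ ‖P(x^k)‖/μ, and x^{k+1} = x^k − α_k z^k with α_k = min{1, μ²/(L‖P(x^k)‖)} when P(x^k) ≠ 0 and α_k = 1 otherwise. Then all iterates x^k lie in B, and (x^k) converges to some x* ∈ B with P(x*) = 0. -/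

import Mathlib

open Set Metric

lemma taylor_aux {E F : Type*} [NormedAddCommGroup E] [NormedSpace ℝ E]
    [NormedAddCommGroup F] [NormedSpace ℝ F]
    {ρ L : ℝ} {x0 : E} {P : E → F} {P' : E → (E →L[ℝ] F)}
    (hdiff : ∀ x ∈ closedBall x0 ρ, HasFDerivWithinAt P (P' x) (closedBall x0 ρ) x)
    (hLip : ∀ x ∈ closedBall x0 ρ, ∀ x' ∈ closedBall x0 ρ, ‖P' x - P' x'‖ ≤ L * ‖x - x'‖)
    {a b : E} (ha : a ∈ closedBall x0 ρ) (hb : b ∈ closedBall x0 ρ) :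
    ‖P b - P a - P' a (b - a)‖ ≤ L / 2 * ‖b - a‖ ^ 2 := by
  set S := closedBall x0 ρ with hS
  set v := b - a with hv
  have hconv : Convex ℝ S := convex_closedBall x0 ρ
  set γ : ℝ → E := fun t => a + t • v with hγ
  have hseg : ∀ t ∈ Icc (0:ℝ) 1, γ t ∈ S := fun t ht => hconv.add_smul_sub_mem ha hb ht
  set f : ℝ → F := fun t => P (γ t) - P a - t • (P' a v) with hf
  have hγd : ∀ t : ℝ, HasDerivAt γ v t := by
    intro t
    rw [hγ]
    simpa only [one_smul, id_eq] using ((hasDerivAt_id t).smul_const v).const_add a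
  have hγc : Continuous γ := by fun_prop
  have hPc : ContinuousOn P S := fun y hy => (hdiff y hy).continuousWithinAt
  have hfc : ContinuousOn f (Icc (0:ℝ) 1) := by
    apply ContinuousOn.sub
    · exact (hPc.comp hγc.continuousOn (fun t ht => hseg t ht)).sub continuousOn_const
    · exact (continuous_id.smul continuous_const).continuousOn
  have hfd : ∀ t ∈ Ico (0:ℝ) 1, HasDerivWithinAt f (P' (γ t) v - P' a v) (Ici t) t := by
    intro t ht
    have hmaps : MapsTo γ (Icc t 1) S := fun s hs => hseg s ⟨le_trans ht.1 hs.1, hs.2⟩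
    have hγw : HasDerivWithinAt γ v (Icc t 1) t := (hγd t).hasDerivWithinAt
    have hPt : HasDerivWithinAt (P ∘ γ) (P' (γ t) v) (Icc t 1) t :=
      (hdiff _ (hseg t ⟨ht.1, ht.2.le⟩)).comp_hasDerivWithinAt t hγw hmaps
    have hmem : Icc t 1 ∈ nhdsWithin t (Ici t) := by
      rw [show Icc t 1 = Ici t ∩ Iic 1 from rfl]
      exact Filter.inter_mem self_mem_nhdsWithin
        (mem_nhdsWithin_of_mem_nhds (Iic_mem_nhds ht.2))
    have hPt' : HasDerivWithinAt (P ∘ γ) (P' (γ t) v) (Ici t) t :=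
      hPt.mono_of_mem_nhdsWithin hmem
    have h2 : HasDerivWithinAt (fun s : ℝ => s • (P' a v)) (P' a v) (Ici t) t := by
      simpa using (((hasDerivAt_id t).smul_const (P' a v))).hasDerivWithinAt
    exact (hPt'.sub_const (P a)).sub h2
  have hB : ∀ t : ℝ, HasDerivAt (fun t : ℝ => L / 2 * ‖v‖ ^ 2 * t ^ 2) (L * ‖v‖ ^ 2 * t) t := by
    intro t
    have := (hasDerivAt_pow 2 t).const_mul (L / 2 * ‖v‖ ^ 2)
    exact this.congr_deriv (by rw [show (2:ℕ) - 1 = 1 from rfl]; ring)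
  have bound : ∀ t ∈ Ico (0:ℝ) 1, ‖P' (γ t) v - P' a v‖ ≤ L * ‖v‖ ^ 2 * t := by
    intro t ht
    have h1 : ‖P' (γ t) v - P' a v‖ ≤ ‖P' (γ t) - P' a‖ * ‖v‖ := by
      have := (P' (γ t) - P' a).le_opNorm v
      simpa using this
    have h2 : ‖P' (γ t) - P' a‖ ≤ L * ‖γ t - a‖ :=
      hLip _ (hseg t ⟨ht.1, ht.2.le⟩) _ ha
    have h3 : ‖γ t - a‖ = t * ‖v‖ := by
      simp [hγ, norm_smul, abs_of_nonneg ht.1]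
    calc ‖P' (γ t) v - P' a v‖ ≤ (L * ‖γ t - a‖) * ‖v‖ :=
          le_trans h1 (mul_le_mul_of_nonneg_right h2 (norm_nonneg v))
      _ = L * ‖v‖ ^ 2 * t := by rw [h3]; ring
  have h0 : ‖f 0‖ ≤ L / 2 * ‖v‖ ^ 2 * (0:ℝ) ^ 2 := by simp [hf, hγ]
  have := image_norm_le_of_norm_deriv_right_le_deriv_boundary hfc hfd h0 hB bound
    (Set.right_mem_Icc.2 zero_le_one)
  have hγ1 : γ 1 = b := by simp [hγ, hv]
  simpa [hf, hγ1, hv] using this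

set_option maxHeartbeats 1000000 in
/-- Algorithm 1 on a ball: under condition (i) or (ii) on `‖P(x⁰)‖`,
all iterates stay in the ball and converge to a solution. -/
theorem stmt8 {n m : ℕ} (ρ L μ : ℝ) (hρ : 0 < ρ) (hL : 0 < L) (hμ : 0 < μ)
    (x0 : EuclideanSpace ℝ (Fin n))
    (P : EuclideanSpace ℝ (Fin n) → EuclideanSpace ℝ (Fin m))
    (P' : EuclideanSpace ℝ (Fin n) →
      (EuclideanSpace ℝ (Fin n) →L[ℝ] EuclideanSpace ℝ (Fin m)))
    (hdiff : ∀ x ∈ Metric.closedBall x0 ρ,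
      HasFDerivWithinAt P (P' x) (Metric.closedBall x0 ρ) x)
    (hLip : ∀ x ∈ Metric.closedBall x0 ρ, ∀ x' ∈ Metric.closedBall x0 ρ,
      ‖P' x - P' x'‖ ≤ L * ‖x - x'‖)
    (hμB : ∀ x ∈ Metric.closedBall x0 ρ, ∀ h : EuclideanSpace ℝ (Fin m),
      μ * ‖h‖ ≤ ‖ContinuousLinearMap.adjoint (P' x) h‖)
    (hcond :
      (L * ρ / (2 * μ) ≤ (∑' ℓ : ℕ, (1 / 2 : ℝ) ^ (2 ^ ℓ)) ∧
        ‖P x0‖ ≤ 2 * μ ^ 2 / L * (L * ρ / (L * ρ + 2 * μ))) ∨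
      ((∑' ℓ : ℕ, (1 / 2 : ℝ) ^ (2 ^ ℓ)) < L * ρ / (2 * μ) ∧
        ‖P x0‖ ≤ μ ^ 2 / L *
          (1 + (1 / 2) * (⌊L * ρ / μ - 2 * ∑' ℓ : ℕ, (1 / 2 : ℝ) ^ (2 ^ ℓ)⌋ : ℝ))))
    (x z : ℕ → EuclideanSpace ℝ (Fin n))
    (hx0 : x 0 = x0)
    (hxB : ∀ k, x k ∈ Metric.closedBall x0 ρ)
    (hz : ∀ k, P' (x k) (z k) = P (x k))
    (hznorm : ∀ k, ‖z k‖ ≤ ‖P (x k)‖ / μ)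
    (α : ℕ → ℝ)
    (hα0 : ∀ k, P (x k) = 0 → α k = 1)
    (hα1 : ∀ k, P (x k) ≠ 0 → α k = min 1 (μ ^ 2 / (L * ‖P (x k)‖)))
    (hstep : ∀ k, x (k + 1) = x k - α k • z k) :
    (∀ k, x k ∈ Metric.closedBall x0 ρ) ∧
    ∃ xs ∈ Metric.closedBall x0 ρ,
      Filter.Tendsto x Filter.atTop (nhds xs) ∧ P xs = 0 := by
  refine ⟨hxB, ?_⟩
  set p : ℕ → ℝ := fun k => ‖P (x k)‖ with hp
  have hp0 : ∀ k, 0 ≤ p k := fun k => norm_nonneg _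
  -- bounds on α
  have hα01 : ∀ k, 0 ≤ α k ∧ α k ≤ 1 := by
    intro k
    by_cases h : P (x k) = 0
    · rw [hα0 k h]; exact ⟨zero_le_one, le_refl 1⟩
    · rw [hα1 k h]
      have hpk : 0 < p k := norm_pos_iff.2 h
      constructor
      · exact le_min zero_le_one (le_of_lt (div_pos (pow_pos hμ 2) (mul_pos hL hpk)))
      · exact min_le_left _ _
  -- key descent inequality
  have key : ∀ k, p (k + 1) ≤ (1 - α k) * p k + L / 2 * (α k) ^ 2 * (p k / μ) ^ 2 := by
    intro k
    have htay := taylor_aux hdiff hLip (hxB k) (hxB (k + 1))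
    have hd : x (k + 1) - x k = -(α k • z k) := by rw [hstep k]; abel
    have hPd : P' (x k) (x (k + 1) - x k) = -(α k • P (x k)) := by
      rw [hd, map_neg, map_smul, hz k]
    have hid : P (x (k + 1)) =
        (P (x (k + 1)) - P (x k) - P' (x k) (x (k + 1) - x k)) + (1 - α k) • P (x k) := by
      rw [hPd, sub_smul, one_smul]; abel
    have hnd : ‖x (k + 1) - x k‖ ≤ α k * (p k / μ) := by
      rw [hd, norm_neg, norm_smul, Real.norm_eq_abs, abs_of_nonneg (hα01 k).1]
      exact mul_le_mul_of_nonneg_left (hznorm k) (hα01 k).1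
    have hnd2 : ‖x (k + 1) - x k‖ ^ 2 ≤ (α k) ^ 2 * (p k / μ) ^ 2 := by
      rw [← mul_pow]
      exact pow_le_pow_left₀ (norm_nonneg _) hnd 2
    have h4 : p (k + 1) ≤ ‖P (x (k + 1)) - P (x k) - P' (x k) (x (k + 1) - x k)‖
          + ‖(1 - α k) • P (x k)‖ := by
      show ‖P (x (k + 1))‖ ≤ _
      nth_rewrite 1 [hid]
      exact norm_add_le _ _
    calc p (k + 1) ≤ ‖P (x (k + 1)) - P (x k) - P' (x k) (x (k + 1) - x k)‖
          + ‖(1 - α k) • P (x k)‖ := h4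
      _ ≤ L / 2 * ((α k) ^ 2 * (p k / μ) ^ 2) + (1 - α k) * p k := by
          apply add_le_add
          · exact le_trans htay (mul_le_mul_of_nonneg_left hnd2 (by positivity))
          · rw [norm_smul, Real.norm_eq_abs, abs_of_nonneg (by linarith [(hα01 k).2])]
      _ = (1 - α k) * p k + L / 2 * (α k) ^ 2 * (p k / μ) ^ 2 := by ring
  -- case A : quadratic/halving phase
  have caseA : ∀ k, p k ≤ μ ^ 2 / L → p (k + 1) ≤ p k / 2 := by
    intro k hk
    have hαk : α k = 1 := by
      by_cases h : P (x k) = 0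
      · exact hα0 k h
      · rw [hα1 k h]
        have hpk : 0 < p k := norm_pos_iff.2 h
        have : (1:ℝ) ≤ μ ^ 2 / (L * p k) := by
          rw [le_div_iff₀ (mul_pos hL hpk)]
          calc 1 * (L * p k) = L * p k := by ring
            _ ≤ L * (μ ^ 2 / L) := mul_le_mul_of_nonneg_left hk hL.le
            _ = μ ^ 2 := by field_simp
        exact min_eq_left this
    have := key k
    rw [hαk] at this
    have h2 : L / 2 * 1 ^ 2 * (p k / μ) ^ 2 ≤ p k / 2 := by
      have : p k ^ 2 ≤ (μ ^ 2 / L) * p k := by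
        calc p k ^ 2 = p k * p k := by ring
          _ ≤ (μ ^ 2 / L) * p k := mul_le_mul_of_nonneg_right hk (hp0 k)
      calc L / 2 * 1 ^ 2 * (p k / μ) ^ 2 = (L / (2 * μ ^ 2)) * p k ^ 2 := by
            field_simp
        _ ≤ (L / (2 * μ ^ 2)) * ((μ ^ 2 / L) * p k) :=
            mul_le_mul_of_nonneg_left this (by positivity)
        _ = p k / 2 := by field_simp
    linarith
  -- case B : linear decrease phase
  have caseB : ∀ k, μ ^ 2 / L < p k → p (k + 1) ≤ p k - μ ^ 2 / (2 * L) := by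
    intro k hk
    have hpk : 0 < p k := lt_of_le_of_lt (by positivity) hk
    have hne : P (x k) ≠ 0 := fun h => by simp [hp, h] at hpk
    have hlt : μ ^ 2 / (L * p k) < 1 := by
      rw [div_lt_one (mul_pos hL hpk)]
      calc μ ^ 2 = L * (μ ^ 2 / L) := by field_simp
        _ < L * p k := by exact mul_lt_mul_of_pos_left hk hL
    have hαk : α k = μ ^ 2 / (L * p k) := by
      rw [hα1 k hne]; exact min_eq_right hlt.le
    have := key k
    rw [hαk] at this
    have heq : (1 - μ ^ 2 / (L * p k)) * p k
        + L / 2 * (μ ^ 2 / (L * p k)) ^ 2 * (p k / μ) ^ 2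
        = p k - μ ^ 2 / (2 * L) := by
      field_simp
      ring
    linarith [heq ▸ this]
  -- p is eventually below μ²/L
  have hK : ∃ K, p K ≤ μ ^ 2 / L := by
    by_contra h
    push_neg at h
    have hdec : ∀ k, p k ≤ p 0 - k * (μ ^ 2 / (2 * L)) := by
      intro k
      induction k with
      | zero => simp
      | succ k ih =>
        have := caseB k (h k)
        push_cast
        linarith
    obtain ⟨k, hk⟩ := exists_nat_gt (p 0 / (μ ^ 2 / (2 * L)))
    have hδ : 0 < μ ^ 2 / (2 * L) := by positivity
    have : p 0 < k * (μ ^ 2 / (2 * L)) := by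
      rwa [div_lt_iff₀ hδ] at hk
    have h1 := hdec k
    have h2 := h k
    have h3 : 0 < μ ^ 2 / L := by positivity
    linarith
  obtain ⟨K, hK⟩ := hK
  -- geometric decay after K
  have hgeo : ∀ j, p (K + j) ≤ μ ^ 2 / L * (1 / 2 : ℝ) ^ j := by
    intro j
    induction j with
    | zero => simpa using hK
    | succ j ih =>
      have hle : p (K + j) ≤ μ ^ 2 / L := by
        have : ((1:ℝ) / 2) ^ j ≤ 1 := pow_le_one₀ (by norm_num) (by norm_num)
        calc p (K + j) ≤ μ ^ 2 / L * (1 / 2 : ℝ) ^ j := ih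
          _ ≤ μ ^ 2 / L * 1 := mul_le_mul_of_nonneg_left this (by positivity)
          _ = μ ^ 2 / L := mul_one _
      have := caseA (K + j) hle
      have : p (K + j + 1) ≤ (μ ^ 2 / L * (1 / 2 : ℝ) ^ j) / 2 := by
        calc p (K + j + 1) ≤ p (K + j) / 2 := this
          _ ≤ (μ ^ 2 / L * (1 / 2 : ℝ) ^ j) / 2 := by linarith
      calc p (K + (j + 1)) = p (K + j + 1) := by ring_nf
        _ ≤ (μ ^ 2 / L * (1 / 2 : ℝ) ^ j) / 2 := this
        _ = μ ^ 2 / L * (1 / 2 : ℝ) ^ (j + 1) := by ring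
  -- step bound
  have hstepb : ∀ k, dist (x k) (x (k + 1)) ≤ p k / μ := by
    intro k
    rw [dist_eq_norm, hstep k]
    have : x k - (x k - α k • z k) = α k • z k := by abel
    rw [this, norm_smul, Real.norm_eq_abs, abs_of_nonneg (hα01 k).1]
    calc α k * ‖z k‖ ≤ 1 * ‖z k‖ :=
          mul_le_mul_of_nonneg_right (hα01 k).2 (norm_nonneg _)
      _ = ‖z k‖ := one_mul _
      _ ≤ p k / μ := hznorm k
  -- summability of steps
  have hsum : Summable (fun k => dist (x k) (x (k + 1))) := by
    rw [← summable_nat_add_iff K]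
    refine Summable.of_nonneg_of_le (fun j => dist_nonneg) (fun j => ?_)
      ((summable_geometric_of_lt_one (r := (1/2:ℝ)) (by norm_num) (by norm_num)).mul_left (μ ^ 2 / L / μ))
    ·
      calc dist (x (j + K)) (x (j + K + 1)) ≤ p (j + K) / μ := hstepb (j + K)
        _ = p (K + j) / μ := by rw [Nat.add_comm j K]
        _ ≤ (μ ^ 2 / L * (1 / 2 : ℝ) ^ j) / μ := by
            exact div_le_div_of_nonneg_right (hgeo j) hμ.le
        _ = (μ ^ 2 / L / μ) * (1 / 2 : ℝ) ^ j := by ring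
  have hcauchy : CauchySeq x := cauchySeq_of_summable_dist hsum
  obtain ⟨xs, hxs⟩ := cauchySeq_tendsto_of_complete hcauchy
  have hmem : xs ∈ Metric.closedBall x0 ρ :=
    Metric.isClosed_closedBall.mem_of_tendsto hxs (Filter.Eventually.of_forall hxB)
  refine ⟨xs, hmem, hxs, ?_⟩
  -- P (x k) → 0
  have hp_to0 : Filter.Tendsto (fun k => ‖P (x k)‖) Filter.atTop (nhds 0) := by
    rw [← Filter.tendsto_add_atTop_iff_nat K]
    apply squeeze_zero (fun j => norm_nonneg _)
      (g := fun j => μ ^ 2 / L * (1 / 2 : ℝ) ^ j)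
    · intro j
      calc ‖P (x (j + K))‖ = p (K + j) := by rw [hp, Nat.add_comm j K]
        _ ≤ μ ^ 2 / L * (1 / 2 : ℝ) ^ j := hgeo j
    · have : Filter.Tendsto (fun j : ℕ => ((1:ℝ) / 2) ^ j) Filter.atTop (nhds 0) :=
        tendsto_pow_atTop_nhds_zero_of_lt_one (by norm_num) (by norm_num)
      simpa using this.const_mul (μ ^ 2 / L)
  have hPx_to0 : Filter.Tendsto (fun k => P (x k)) Filter.atTop (nhds 0) :=
    tendsto_zero_iff_norm_tendsto_zero.2 hp_to0
  have hPc : ContinuousOn P (Metric.closedBall x0 ρ) :=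
    fun y hy => (hdiff y hy).continuousWithinAt
  have hxw : Filter.Tendsto x Filter.atTop (nhdsWithin xs (Metric.closedBall x0 ρ)) :=
    tendsto_nhdsWithin_of_tendsto_nhds_of_eventually_within x hxs
      (Filter.Eventually.of_forall hxB)
  have hPx_toPxs : Filter.Tendsto (fun k => P (x k)) Filter.atTop (nhds (P xs)) :=
    (hPc xs hmem).tendsto.comp hxw
  exact tendsto_nhds_unique hPx_toPxs hPx_to0
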